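/- Let p be a PDB over a finite set T of tuples and E a set of hyperedges over T such that the PDB is consistent w.r.t. E. Let S ⊆ T be a set of tuples such that no two distinct tuples of S are connected by a path in the conflict hypergraph (T, E). Then p^min(S) = max{0, Σ_{t∈S} p(t) − |S| + 1}. -/

import Mathlib

open Finset

variable {τ : Type*} [Fintype τ] [DecidableEq τ]

/-- An interpretation of a PDB `p`: a probability distribution over possible worlds
(subsets of the set of tuples) whose marginals agree with `p`. -/
def IsInterp (p : τ → ℝ) (Pr : Finset τ → ℝ) : Prop :=
  (∀ w, 0 ≤ Pr w) ∧ (∑ w : Finset τ, Pr w = 1) ∧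
  (∀ t : τ, ∑ w ∈ Finset.univ.filter (fun w => t ∈ w), Pr w = p t)

/-- A model of the PDB `p` w.r.t. the hyperedge set `E`: an interpretation assigning
probability 0 to every world containing some hyperedge of `E`. -/
def IsModel (p : τ → ℝ) (E : Set (Finset τ)) (Pr : Finset τ → ℝ) : Prop :=
  IsInterp p Pr ∧ ∀ w : Finset τ, (∃ e ∈ E, e ⊆ w) → Pr w = 0

/-- The PDB `p` is consistent w.r.t. `E` if a model exists. -/
def Consistent (p : τ → ℝ) (E : Set (Finset τ)) : Prop :=
  ∃ Pr, IsModel p E Pr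

/-- The probability, under `Pr`, that all tuples of `S` co-exist. -/
def coexistProb (Pr : Finset τ → ℝ) (S : Finset τ) : ℝ :=
  ∑ w ∈ Finset.univ.filter (fun w => S ⊆ w), Pr w

/-- A path in a hypergraph with hyperedge set `E`, connecting nodes `n1` and `n2`. -/
def IsHyperPath (E : Set (Finset τ)) (n1 n2 : τ) (l : List (Finset τ)) : Prop :=
  l ≠ [] ∧ l.Nodup ∧ (∀ e ∈ l, e ∈ E) ∧
  (∃ e1 ∈ l.head?, n1 ∈ e1) ∧ (∃ em ∈ l.getLast?, n2 ∈ em) ∧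
  l.Chain' (fun a b => (a ∩ b).Nonempty)


set_option linter.unusedSectionVars false
set_option maxHeartbeats 1000000

def IsWeakPath (E : Set (Finset τ)) (n1 n2 : τ) (l : List (Finset τ)) : Prop :=
  l ≠ [] ∧ (∀ e ∈ l, e ∈ E) ∧
  (∃ e1 ∈ l.head?, n1 ∈ e1) ∧ (∃ em ∈ l.getLast?, n2 ∈ em) ∧
  l.Chain' (fun a b => (a ∩ b).Nonempty)

lemma not_nodup_decomp : ∀ (l : List (Finset τ)), ¬ l.Nodup →
    ∃ (a : Finset τ) (l1 l2 l3 : List (Finset τ)), l = l1 ++ a :: (l2 ++ a :: l3) := by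
  intro l
  induction l with
  | nil => intro h; exact absurd List.nodup_nil h
  | cons b l' ih =>
    intro h
    rw [List.nodup_cons] at h
    push_neg at h
    by_cases hb : b ∈ l'
    · obtain ⟨s, t, rfl⟩ := List.append_of_mem hb
      exact ⟨b, [], s, t, by simp⟩
    · obtain ⟨a, l1, l2, l3, rfl⟩ := ih (h hb)
      exact ⟨a, b :: l1, l2, l3, by simp⟩

lemma head?_indep (l1 : List (Finset τ)) (a : Finset τ) (xs ys : List (Finset τ)) :
    (l1 ++ a :: xs).head? = (l1 ++ a :: ys).head? := by
  cases l1 <;> simp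

lemma weak_shortcut {E : Set (Finset τ)} {n1 n2 : τ} {a : Finset τ}
    {l1 l2 l3 : List (Finset τ)} (h : IsWeakPath E n1 n2 (l1 ++ a :: (l2 ++ a :: l3))) :
    IsWeakPath E n1 n2 (l1 ++ a :: l3) := by
  obtain ⟨hne, hE, ⟨e1, he1, hn1⟩, ⟨em, hem, hn2⟩, hch⟩ := h
  refine ⟨by simp, ?_, ?_, ?_, ?_⟩
  · intro e he
    apply hE
    simp only [List.mem_append, List.mem_cons] at he ⊢
    tauto
  · exact ⟨e1, by rwa [head?_indep l1 a l3 (l2 ++ a :: l3)], hn1⟩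
  · refine ⟨em, ?_, hn2⟩
    rw [show l1 ++ a :: (l2 ++ a :: l3) = (l1 ++ a :: l2) ++ (a :: l3) by simp,
      List.getLast?_append_cons] at hem
    rw [List.getLast?_append_cons]
    exact hem
  · unfold List.Chain' at hch ⊢
    rw [List.isChain_append] at hch ⊢
    obtain ⟨h1, h2, h12⟩ := hch
    refine ⟨h1, ?_, ?_⟩
    · rw [show a :: (l2 ++ a :: l3) = (a :: l2) ++ (a :: l3) by simp, List.isChain_append] at h2
      exact h2.2.1
    · intro x hx y hy
      exact h12 x hx y (by simpa using hy)

lemma weak_imp_path {E : Set (Finset τ)} {n1 n2 : τ} :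
    ∀ (n : ℕ) (l : List (Finset τ)), l.length ≤ n → IsWeakPath E n1 n2 l →
      ∃ l', IsHyperPath E n1 n2 l' := by
  intro n
  induction n with
  | zero => intro l hl hw; interval_cases h : l.length <;> simp_all [IsWeakPath]
  | succ n ih =>
    intro l hl hw
    by_cases hnd : l.Nodup
    · exact ⟨l, hw.1, hnd, hw.2.1, hw.2.2.1, hw.2.2.2.1, hw.2.2.2.2⟩
    · obtain ⟨a, l1, l2, l3, rfl⟩ := not_nodup_decomp l hnd
      apply ih (l1 ++ a :: l3)
      · have := hl
        simp only [List.length_append, List.length_cons] at this ⊢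
        omega
      · exact weak_shortcut hw

def Conn (E : Set (Finset τ)) (x y : τ) : Prop := x = y ∨ ∃ l, IsHyperPath E x y l

lemma IsHyperPath.weak {E : Set (Finset τ)} {n1 n2 : τ} {l : List (Finset τ)}
    (h : IsHyperPath E n1 n2 l) : IsWeakPath E n1 n2 l :=
  ⟨h.1, h.2.2.1, h.2.2.2.1, h.2.2.2.2.1, h.2.2.2.2.2⟩

lemma conn_refl (E : Set (Finset τ)) (x : τ) : Conn E x x := Or.inl rfl

lemma conn_symm {E : Set (Finset τ)} {x y : τ} (h : Conn E x y) : Conn E y x := by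
  rcases h with rfl | ⟨l, hne, hnd, hE, ⟨e1, he1, h1⟩, ⟨em, hem, h2⟩, hch⟩
  · exact Or.inl rfl
  · refine Or.inr ⟨l.reverse, by simpa, by simpa, by simpa using hE, ?_, ?_, ?_⟩
    · exact ⟨em, by simpa [List.head?_reverse] using hem, h2⟩
    · exact ⟨e1, by simpa [List.getLast?_reverse] using he1, h1⟩
    · unfold List.Chain' at hch ⊢
      rw [List.isChain_reverse]
      apply hch.imp
      intro a b hab
      rwa [Finset.inter_comm] at hab
      
lemma conn_trans {E : Set (Finset τ)} {x y z : τ} (h1 : Conn E x y) (h2 : Conn E y z) :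
    Conn E x z := by
  rcases h1 with rfl | ⟨la, ha⟩
  · exact h2
  rcases h2 with rfl | ⟨lb, hb⟩
  · exact Or.inr ⟨la, ha⟩
  obtain ⟨hane, hand, haE, ⟨e1, he1, hx⟩, ⟨em, hem, hy⟩, hach⟩ := ha
  obtain ⟨hbne, hbnd, hbE, ⟨f1, hf1, hy'⟩, ⟨fm, hfm, hz⟩, hbch⟩ := hb
  have hweak : IsWeakPath E x z (la ++ lb) := by
    refine ⟨by simp [hane], ?_, ?_, ?_, ?_⟩
    · intro e he; rcases List.mem_append.1 he with h | h
      exacts [haE e h, hbE e h]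
    · refine ⟨e1, ?_, hx⟩
      rcases la with _ | ⟨c, la'⟩
      · exact absurd rfl hane
      · simpa using he1
    · exact ⟨fm, List.mem_getLast?_append_of_mem_getLast? hfm, hz⟩
    · unfold List.Chain'
      rw [List.isChain_append]
      refine ⟨hach, hbch, ?_⟩
      intro u hu v hv
      have : u = em := by rw [hem] at hu; exact Option.some.inj hu.symm ▸ rfl
      have hv' : v = f1 := by rw [hf1] at hv; exact (Option.some.inj hv).symm
      subst this; subst hv'
      exact ⟨y, Finset.mem_inter.2 ⟨hy, hy'⟩⟩
  exact Or.inr (weak_imp_path (la ++ lb).length _ le_rfl hweak)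

lemma conn_of_edge {E : Set (Finset τ)} {e : Finset τ} (he : e ∈ E) {x y : τ}
    (hx : x ∈ e) (hy : y ∈ e) : Conn E x y :=
  Or.inr ⟨[e], by simp, by simp, by simp [he], ⟨e, by simp, hx⟩, ⟨e, by simp, hy⟩, List.isChain_singleton _⟩

lemma max_min_arith (s d : ℝ) (hd0 : 0 ≤ d) :
    max 0 s - min d (max 0 s) = max 0 (s - d) := by
  rcases le_total s 0 with h | h
  · rw [max_eq_left h, max_eq_left (by linarith), min_eq_right hd0]
    ring
  · rw [max_eq_right h]
    rcases le_total d s with h2 | h2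
    · rw [min_eq_left h2, max_eq_right (by linarith)]
    · rw [min_eq_right h2, max_eq_left (by linarith)]
      ring

lemma exists_coupling (q : τ → ℝ) (hq : ∀ t, 0 ≤ q t ∧ q t ≤ 1) (S : Finset τ) :
    ∃ μ : Finset τ → ℝ, (∀ X, 0 ≤ μ X) ∧ (∀ X, ¬ X ⊆ S → μ X = 0) ∧
      (∑ X : Finset τ, μ X = 1) ∧
      (∀ t ∈ S, ∑ X ∈ univ.filter (fun X => t ∈ X), μ X = q t) ∧
      μ S = max 0 ((∑ t ∈ S, q t) - (S.card : ℝ) + 1) := by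
  induction S using Finset.induction_on with
  | empty =>
    refine ⟨fun X => if X = ∅ then 1 else 0, ?_, ?_, by simp, by simp, by simp⟩
    · intro X; dsimp only; split <;> norm_num
    · intro X hX; dsimp only; rw [if_neg]; intro h; subst h; simp at hX
  | @insert a S' ha ih =>
    obtain ⟨μ', hnn', hsupp', htot', hmarg', hfull'⟩ := ih
    set d : ℝ := 1 - q a with hd_def
    set m' : ℝ := μ' S' with hm_def
    have hd0 : 0 ≤ d := by have := (hq a).2; simp [hd_def]; linarith
    have hd1 : d ≤ 1 := by have := (hq a).1; simp [hd_def]; linarith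
    have hm0 : 0 ≤ m' := hnn' S'
    have hm1 : m' ≤ 1 := by
      rw [← htot']
      exact Finset.single_le_sum (fun X _ => hnn' X) (mem_univ S')
    set β : ℝ := min d m' with hβ_def
    set c : ℝ := if m' = 1 then 0 else (d - β) / (1 - m') with hc_def
    have hβ0 : 0 ≤ β := le_min hd0 hm0
    have hβd : β ≤ d := min_le_left _ _
    have hβm : β ≤ m' := min_le_right _ _
    have hkey : β + c * (1 - m') = d := by
      rw [hc_def]
      split_ifs with h1
      · have : β = d := by rw [hβ_def, h1, min_eq_left hd1]
        rw [this]; ring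
      · have hne : 1 - m' ≠ 0 := fun h => h1 (by linarith)
        field_simp
        ring
    have hc0 : 0 ≤ c := by
      rw [hc_def]; split_ifs with h1
      · exact le_refl 0
      · have : m' < 1 := lt_of_le_of_ne hm1 h1
        exact div_nonneg (by linarith) (by linarith)
    have hc1 : c ≤ 1 := by
      rw [hc_def]; split_ifs with h1
      · norm_num
      · have hlt : m' < 1 := lt_of_le_of_ne hm1 h1
        rw [div_le_one (by linarith)]
        have : d - β ≤ 1 - m' := by
          rcases le_total d m' with h | h
          · rw [hβ_def, min_eq_left h]; linarith
          · rw [hβ_def, min_eq_right h]; linarith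
        linarith
    classical
    set μ : Finset τ → ℝ := fun X =>
      if a ∈ X then (if X = insert a S' then m' - β else (1 - c) * μ' (X.erase a))
      else (if X = S' then β else c * μ' X) with hμ_def
    -- key reindexing: sum over all X = sum over a-free Y of F (insert a Y) + F Y
    have split : ∀ F : Finset τ → ℝ, ∑ X : Finset τ, F X =
        ∑ Y ∈ univ.filter (fun Y => a ∉ Y), (F (insert a Y) + F Y) := by
      intro F
      rw [← Finset.sum_filter_add_sum_filter_not univ (fun X => a ∈ X) F, Finset.sum_add_distrib]
      congr 1
      apply Finset.sum_nbij' (fun X => X.erase a) (fun Y => insert a Y)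
      · intro X hX; simp only [mem_filter, mem_univ, true_and] at hX ⊢
        simp [hX]
      · intro Y hY; simp only [mem_filter, mem_univ, true_and] at hY ⊢
        simp [hY]
      · intro X hX; simp only [mem_filter, mem_univ, true_and] at hX
        simp [Finset.insert_erase hX]
      · intro Y hY; simp only [mem_filter, mem_univ, true_and] at hY
        simp [Finset.erase_insert hY]
      · intro X hX; simp only [mem_filter, mem_univ, true_and] at hX
        rw [Finset.insert_erase hX]
    -- on a-free sets, the pair sums to μ' Y times indicator things
    have hins_ne : ∀ Y : Finset τ, a ∉ Y → Y ≠ S' → insert a Y ≠ insert a S' := by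
      intro Y hY h hh
      apply h
      have := congrArg (fun Z => Finset.erase Z a) hh
      simpa [Finset.erase_insert hY, Finset.erase_insert ha] using this
    have hpair : ∀ Y : Finset τ, a ∉ Y → μ (insert a Y) + μ Y = μ' Y := by
      intro Y hY
      simp only [hμ_def]
      rw [if_pos (Finset.mem_insert_self a Y), if_neg hY]
      by_cases h : Y = S'
      · subst h; rw [if_pos rfl, if_pos rfl]; ring
      · rw [if_neg (hins_ne Y hY h), if_neg h, Finset.erase_insert hY]; ring
    have hμins : ∀ Y : Finset τ, a ∉ Y →
        μ (insert a Y) = (1 - c) * μ' Y + (if Y = S' then (m' - β) - (1 - c) * m' else 0) := by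
      intro Y hY
      simp only [hμ_def]
      rw [if_pos (Finset.mem_insert_self a Y)]
      by_cases h : Y = S'
      · subst h; rw [if_pos rfl, if_pos rfl]; ring
      · rw [if_neg (hins_ne Y hY h), if_neg h, Finset.erase_insert hY]; ring
    -- sums of μ' over a-free sets equal sums over everything
    have toUniv : ∀ g : Finset τ → ℝ,
        ∑ Y ∈ univ.filter (fun Y => a ∉ Y), μ' Y * g Y = ∑ Y : Finset τ, μ' Y * g Y := by
      intro g
      rw [← Finset.sum_filter_add_sum_filter_not univ (fun X => a ∉ X) (fun Y => μ' Y * g Y)]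
      have : ∑ Y ∈ univ.filter (fun Y => ¬ a ∉ Y), μ' Y * g Y = 0 := by
        apply Finset.sum_eq_zero
        intro Y hY
        simp only [mem_filter, mem_univ, true_and, not_not] at hY
        rw [hsupp' Y (fun hsub => ha (hsub hY))]
        ring
      rw [this]; ring
    have hS'mem : S' ∈ univ.filter (fun Y => a ∉ Y) := by simp [ha]
    refine ⟨μ, ?_, ?_, ?_, ?_, ?_⟩
    · -- nonneg
      intro X
      simp only [hμ_def]
      split_ifs <;> first
        | exact hβ0
        | linarith
        | exact mul_nonneg (by linarith) (hnn' _)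
    · -- support
      intro X hX
      simp only [hμ_def]
      split_ifs with h1 h2 h3
      · exact absurd (h2 ▸ Finset.Subset.refl _) hX
      · rw [hsupp' _ (fun hsub => hX (fun x hx => by
          rcases Finset.mem_insert.1 (Finset.mem_insert.2 (by
            by_cases hxa : x = a
            · exact Or.inl hxa
            · exact Or.inr (hsub (Finset.mem_erase.2 ⟨hxa, hx⟩)))) with h | h
          · exact h ▸ Finset.mem_insert_self a S'
          · exact Finset.mem_insert_of_mem h))]
        ring
      · exact absurd (h3 ▸ Finset.subset_insert a S') hX
      · rw [hsupp' _ (fun hsub => hX (hsub.trans (Finset.subset_insert a S')))]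
        ring
    · -- total
      rw [split μ]
      have : ∀ Y ∈ univ.filter (fun Y => a ∉ Y), μ (insert a Y) + μ Y = μ' Y * 1 := by
        intro Y hY
        simp only [mem_filter, mem_univ, true_and] at hY
        rw [hpair Y hY]; ring
      rw [Finset.sum_congr rfl this, toUniv]
      simpa using htot'
    · -- marginals
      intro t ht
      rw [Finset.sum_filter]
      rw [split (fun X => if t ∈ X then μ X else 0)]
      rcases Finset.mem_insert.1 ht with rfl | htS'
      · -- t = a
        have : ∀ Y ∈ univ.filter (fun Y => t ∉ Y),
            ((if t ∈ insert t Y then μ (insert t Y) else 0) + (if t ∈ Y then μ Y else 0)) =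
            (1 - c) * μ' Y * 1 + (if Y = S' then (m' - β) - (1 - c) * m' else 0) := by
          intro Y hY
          simp only [mem_filter, mem_univ, true_and] at hY
          rw [if_pos (Finset.mem_insert_self t Y), if_neg hY, hμins Y hY]
          ring
        rw [Finset.sum_congr rfl this, Finset.sum_add_distrib]
        have e1 : ∑ Y ∈ univ.filter (fun Y => t ∉ Y), (1 - c) * μ' Y * 1 =
            (1 - c) * ∑ Y ∈ univ.filter (fun Y => t ∉ Y), μ' Y * 1 := by
          rw [Finset.mul_sum]; apply Finset.sum_congr rfl; intros; ring
        rw [e1, toUniv, Finset.sum_ite_eq' _ S' (fun _ => (m' - β) - (1 - c) * m'), if_pos hS'mem]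
        simp only [mul_one]
        rw [htot']
        -- (1-c)*1 + ((m'-β) - (1-c)*m') = q a
        have : (1 - c) * 1 + ((m' - β) - (1 - c) * m') = 1 - (β + c * (1 - m')) := by ring
        rw [this, hkey]
        simp [hd_def]
      · -- t ∈ S'
        have hta : t ≠ a := fun h => ha (h ▸ htS')
        have : ∀ Y ∈ univ.filter (fun Y => a ∉ Y),
            ((if t ∈ insert a Y then μ (insert a Y) else 0) + (if t ∈ Y then μ Y else 0)) =
            μ' Y * (if t ∈ Y then 1 else 0) := by
          intro Y hY
          simp only [mem_filter, mem_univ, true_and] at hY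
          by_cases h : t ∈ Y
          · rw [if_pos h, if_pos h, if_pos (Finset.mem_insert_of_mem h), hpair Y hY]; ring
          · rw [if_neg h, if_neg h, if_neg (fun hh => h (by
              rcases Finset.mem_insert.1 hh with h1 | h1
              exacts [absurd h1 hta, h1]))]
            simp
        rw [Finset.sum_congr rfl this, toUniv]
        simp only [mul_ite, mul_one, mul_zero]
        rw [← Finset.sum_filter]
        exact hmarg' t htS'
    · -- value at insert a S'
      have hval : μ (insert a S') = m' - β := by simp [hμ_def]
      have harith := max_min_arith ((∑ t ∈ S', q t) - (S'.card : ℝ) + 1) d hd0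
      rw [hval, Finset.sum_insert ha, Finset.card_insert_of_notMem ha, hβ_def, hfull', harith]
      congr 1
      push_cast
      rw [hd_def]
      ring

lemma sum_powerset_union_disjoint (s t : Finset τ) (hst : Disjoint s t) (f : Finset τ → ℝ) :
    ∑ w ∈ (s ∪ t).powerset, f w = ∑ A ∈ s.powerset, ∑ B ∈ t.powerset, f (A ∪ B) := by
  rw [← Finset.sum_product']
  apply Finset.sum_nbij' (i := fun w => (w ∩ s, w ∩ t)) (j := fun P => P.1 ∪ P.2)
  · intro w hw
    simp only [Finset.mem_product, Finset.mem_powerset]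
    exact ⟨Finset.inter_subset_right, Finset.inter_subset_right⟩
  · intro P hP
    simp only [Finset.mem_product, Finset.mem_powerset] at hP
    simp only [Finset.mem_powerset]
    exact Finset.union_subset_union hP.1 hP.2
  · intro w hw
    simp only [Finset.mem_powerset] at hw
    rw [← Finset.inter_union_distrib_left, Finset.inter_eq_left.2 hw]
  · intro P hP
    simp only [Finset.mem_product, Finset.mem_powerset] at hP
    have h1 : P.1 ∩ s = P.1 := Finset.inter_eq_left.2 hP.1
    have h3 : P.2 ∩ t = P.2 := Finset.inter_eq_left.2 hP.2
    have h2 : P.2 ∩ s = ∅ := by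
      apply Finset.eq_empty_of_forall_notMem
      intro x hx
      rw [Finset.mem_inter] at hx
      exact absurd hx.2 (Finset.disjoint_right.mp hst (hP.2 hx.1))
    have h4 : P.1 ∩ t = ∅ := by
      apply Finset.eq_empty_of_forall_notMem
      intro x hx
      rw [Finset.mem_inter] at hx
      exact absurd hx.2 (Finset.disjoint_left.mp hst (hP.1 hx.1))
    have : ((P.1 ∪ P.2) ∩ s, (P.1 ∪ P.2) ∩ t) = P := by
      rw [Finset.union_inter_distrib_right, h1, h2, Finset.union_empty,
        Finset.union_inter_distrib_right, h4, h3, Finset.empty_union]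
    exact this
  · intro w hw
    simp only [Finset.mem_powerset] at hw
    show f w = f ((w ∩ s) ∪ (w ∩ t))
    rw [← Finset.inter_union_distrib_left, Finset.inter_eq_left.2 hw]

lemma factor_sum (S : Finset τ) (D : τ → Finset τ) (V : Finset τ)
    (g : τ → Finset τ → ℝ) (h : Finset τ → ℝ)
    (hdisj : ∀ t1 ∈ S, ∀ t2 ∈ S, t1 ≠ t2 → Disjoint (D t1) (D t2))
    (hV : ∀ t ∈ S, Disjoint (D t) V) :
    ∑ w ∈ (S.biUnion D ∪ V).powerset, (∏ t ∈ S, g t (w ∩ D t)) * h (w ∩ V) =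
      (∏ t ∈ S, ∑ A ∈ (D t).powerset, g t A) * (∑ B ∈ V.powerset, h B) := by
  induction S using Finset.induction_on with
  | empty =>
    simp only [Finset.biUnion_empty, Finset.empty_union, Finset.prod_empty, one_mul]
    apply Finset.sum_congr rfl
    intro w hw
    rw [Finset.inter_eq_left.2 (Finset.mem_powerset.1 hw)]
  | @insert a S' ha ih =>
    have hDa : Disjoint (D a) (S'.biUnion D ∪ V) := by
      rw [Finset.disjoint_union_right, Finset.disjoint_biUnion_right]
      constructor
      · intro t ht
        exact hdisj a (Finset.mem_insert_self a S') t (Finset.mem_insert_of_mem ht)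
          (fun h => ha (h ▸ ht))
      · exact hV a (Finset.mem_insert_self a S')
    rw [show (insert a S').biUnion D ∪ V = D a ∪ (S'.biUnion D ∪ V) by
          rw [Finset.biUnion_insert, Finset.union_assoc],
        sum_powerset_union_disjoint _ _ hDa]
    have step : ∀ A ∈ (D a).powerset, ∀ v ∈ (S'.biUnion D ∪ V).powerset,
        (∏ t ∈ insert a S', g t ((A ∪ v) ∩ D t)) * h ((A ∪ v) ∩ V) =
        g a A * ((∏ t ∈ S', g t (v ∩ D t)) * h (v ∩ V)) := by
      intro A hA v hv
      rw [Finset.mem_powerset] at hA hv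
      have hvDa : v ∩ D a = ∅ := by
        apply Finset.eq_empty_of_forall_notMem
        intro x hx
        rw [Finset.mem_inter] at hx
        exact absurd (hv hx.1) (Finset.disjoint_left.mp hDa hx.2)
      have hADa : (A ∪ v) ∩ D a = A := by
        rw [Finset.union_inter_distrib_right, Finset.inter_eq_left.2 hA, hvDa,
          Finset.union_empty]
      have hADt : ∀ t ∈ S', (A ∪ v) ∩ D t = v ∩ D t := by
        intro t ht
        rw [Finset.union_inter_distrib_right]
        have : A ∩ D t = ∅ := by
          apply Finset.eq_empty_of_forall_notMem
          intro x hx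
          rw [Finset.mem_inter] at hx
          exact absurd hx.2 (Finset.disjoint_left.mp
            (hdisj a (Finset.mem_insert_self a S') t (Finset.mem_insert_of_mem ht)
              (fun h => ha (h ▸ ht))) (hA hx.1))
        rw [this, Finset.empty_union]
      have hAV : (A ∪ v) ∩ V = v ∩ V := by
        rw [Finset.union_inter_distrib_right]
        have : A ∩ V = ∅ := by
          apply Finset.eq_empty_of_forall_notMem
          intro x hx
          rw [Finset.mem_inter] at hx
          exact absurd hx.2 (Finset.disjoint_left.mp (hV a (Finset.mem_insert_self a S'))
            (hA hx.1))
        rw [this, Finset.empty_union]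
      rw [Finset.prod_insert ha, hADa, hAV, Finset.prod_congr rfl (fun t ht => congrArg (g t) (hADt t ht))]
      ring
    calc ∑ A ∈ (D a).powerset, ∑ v ∈ (S'.biUnion D ∪ V).powerset,
            (∏ t ∈ insert a S', g t ((A ∪ v) ∩ D t)) * h ((A ∪ v) ∩ V)
        = ∑ A ∈ (D a).powerset, g a A * ∑ v ∈ (S'.biUnion D ∪ V).powerset,
            (∏ t ∈ S', g t (v ∩ D t)) * h (v ∩ V) := by
          apply Finset.sum_congr rfl
          intro A hA
          rw [Finset.mul_sum]
          exact Finset.sum_congr rfl (fun v hv => step A hA v hv)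
      _ = (∏ t ∈ insert a S', ∑ A ∈ (D t).powerset, g t A) * (∑ B ∈ V.powerset, h B) := by
          rw [ih (fun t1 ht1 t2 ht2 hne => hdisj t1 (Finset.mem_insert_of_mem ht1) t2
                (Finset.mem_insert_of_mem ht2) hne)
              (fun t ht => hV t (Finset.mem_insert_of_mem ht)),
            Finset.prod_insert ha, ← Finset.sum_mul]
          ring

lemma fiber_sum (s : Finset (Finset τ)) (g : Finset τ → Finset τ) (T : Finset (Finset τ))
    (hmaps : ∀ w ∈ s, g w ∈ T) (f φ : Finset τ → ℝ) :
    ∑ A ∈ T, (∑ w ∈ s.filter (fun w => g w = A), f w) * φ A = ∑ w ∈ s, f w * φ (g w) := by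
  have : ∀ A ∈ T, (∑ w ∈ s.filter (fun w => g w = A), f w) * φ A
      = ∑ w ∈ s.filter (fun w => g w = A), f w * φ (g w) := by
    intro A hA
    rw [Finset.sum_mul]
    apply Finset.sum_congr rfl
    intro w hw
    rw [(Finset.mem_filter.1 hw).2]
  rw [Finset.sum_congr rfl this, Finset.sum_fiberwise_of_maps_to hmaps]

noncomputable def nu1 (p : τ → ℝ) (Pr : Finset τ → ℝ) (C : Finset τ) (t : τ) (A : Finset τ) : ℝ :=
  if p t = 0 then (if A = ∅ then 1 else 0)
  else (∑ w ∈ (univ.filter (fun w => t ∈ w)).filter (fun w => w ∩ C = A), Pr w) / p t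

noncomputable def nu0 (p : τ → ℝ) (Pr : Finset τ → ℝ) (C : Finset τ) (t : τ) (A : Finset τ) : ℝ :=
  if p t = 1 then (if A = ∅ then 1 else 0)
  else (∑ w ∈ (univ.filter (fun w => t ∉ w)).filter (fun w => w ∩ C = A), Pr w) / (1 - p t)

section NuLemmas

variable {p : τ → ℝ} {Pr : Finset τ → ℝ} {C : Finset τ} {t : τ}

lemma nu1_nonneg (hPr0 : ∀ w, 0 ≤ Pr w) (hp0 : 0 ≤ p t) (A : Finset τ) :
    0 ≤ nu1 p Pr C t A := by
  rw [nu1]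
  split_ifs with h1 h2
  · norm_num
  · norm_num
  · exact div_nonneg (Finset.sum_nonneg (fun w _ => hPr0 w)) hp0

lemma nu0_nonneg (hPr0 : ∀ w, 0 ≤ Pr w) (hp1 : p t ≤ 1) (A : Finset τ) :
    0 ≤ nu0 p Pr C t A := by
  rw [nu0]
  split_ifs with h1 h2
  · norm_num
  · norm_num
  · have : (0:ℝ) ≤ 1 - p t := by linarith
    exact div_nonneg (Finset.sum_nonneg (fun w _ => hPr0 w)) this

lemma nu1_phi (φ : Finset τ → ℝ) (hpt : p t ≠ 0) :
    ∑ A ∈ C.powerset, nu1 p Pr C t A * φ A =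
      (∑ w ∈ univ.filter (fun w => t ∈ w), Pr w * φ (w ∩ C)) / p t := by
  have hmaps : ∀ w ∈ univ.filter (fun w => t ∈ w), w ∩ C ∈ C.powerset := by
    intro w _
    simp [Finset.mem_powerset]
  rw [← fiber_sum (univ.filter (fun w => t ∈ w)) (· ∩ C) C.powerset hmaps Pr φ,
    Finset.sum_div]
  apply Finset.sum_congr rfl
  intro A hA
  rw [nu1, if_neg hpt]
  ring

lemma nu0_phi (φ : Finset τ → ℝ) (hpt : p t ≠ 1) :
    ∑ A ∈ C.powerset, nu0 p Pr C t A * φ A =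
      (∑ w ∈ univ.filter (fun w => t ∉ w), Pr w * φ (w ∩ C)) / (1 - p t) := by
  have hmaps : ∀ w ∈ univ.filter (fun w => t ∉ w), w ∩ C ∈ C.powerset := by
    intro w _
    simp [Finset.mem_powerset]
  rw [← fiber_sum (univ.filter (fun w => t ∉ w)) (· ∩ C) C.powerset hmaps Pr φ,
    Finset.sum_div]
  apply Finset.sum_congr rfl
  intro A hA
  rw [nu0, if_neg hpt]
  ring

lemma marg_compl (hPr1 : ∑ w : Finset τ, Pr w = 1)
    (hmarg : ∑ w ∈ univ.filter (fun w => t ∈ w), Pr w = p t) :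
    ∑ w ∈ univ.filter (fun w => t ∉ w), Pr w = 1 - p t := by
  have h := Finset.sum_filter_add_sum_filter_not univ (fun w => t ∈ w) Pr
  rw [hPr1, hmarg] at h
  linarith

lemma nu1_total (hmarg : ∑ w ∈ univ.filter (fun w => t ∈ w), Pr w = p t) :
    ∑ A ∈ C.powerset, nu1 p Pr C t A = 1 := by
  by_cases hpt : p t = 0
  · have : ∀ A ∈ C.powerset, nu1 p Pr C t A = if A = ∅ then 1 else 0 := by
      intro A _; rw [nu1, if_pos hpt]
    rw [Finset.sum_congr rfl this, Finset.sum_ite_eq' C.powerset ∅ (fun _ => (1:ℝ)),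
      if_pos (Finset.empty_mem_powerset C)]
  · have : ∀ A ∈ C.powerset, nu1 p Pr C t A = nu1 p Pr C t A * 1 := by intros; ring
    rw [Finset.sum_congr rfl this, nu1_phi (fun _ => 1) hpt]
    have : ∀ w ∈ univ.filter (fun w => t ∈ w), Pr w * 1 = Pr w := by intros; ring
    rw [Finset.sum_congr rfl this, hmarg, div_self hpt]

lemma nu0_total (hPr1 : ∑ w : Finset τ, Pr w = 1)
    (hmarg : ∑ w ∈ univ.filter (fun w => t ∈ w), Pr w = p t) :
    ∑ A ∈ C.powerset, nu0 p Pr C t A = 1 := by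
  by_cases hpt : p t = 1
  · have : ∀ A ∈ C.powerset, nu0 p Pr C t A = if A = ∅ then 1 else 0 := by
      intro A _; rw [nu0, if_pos hpt]
    rw [Finset.sum_congr rfl this, Finset.sum_ite_eq' C.powerset ∅ (fun _ => (1:ℝ)),
      if_pos (Finset.empty_mem_powerset C)]
  · have : ∀ A ∈ C.powerset, nu0 p Pr C t A = nu0 p Pr C t A * 1 := by intros; ring
    rw [Finset.sum_congr rfl this, nu0_phi (fun _ => 1) hpt]
    have : ∀ w ∈ univ.filter (fun w => t ∉ w), Pr w * 1 = Pr w := by intros; ring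
    rw [Finset.sum_congr rfl this, marg_compl hPr1 hmarg, div_self (by
      intro h; exact hpt (by linarith))]

lemma nu1_x {x : τ} (hx : x ∈ C) (hPr0' : ∀ w, 0 ≤ Pr w)
    (hmarg : ∑ w ∈ univ.filter (fun w => t ∈ w), Pr w = p t) :
    p t * ∑ A ∈ C.powerset, nu1 p Pr C t A * (if x ∈ A then 1 else 0) =
      ∑ w ∈ univ.filter (fun w => t ∈ w), Pr w * (if x ∈ w then 1 else 0) := by
  by_cases hpt : p t = 0
  · rw [hpt, zero_mul]
    symm
    apply Finset.sum_eq_zero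
    intro w hw
    have h0 : Pr w = 0 := by
      have hsum : ∑ w ∈ univ.filter (fun w => t ∈ w), Pr w = 0 := by rw [hmarg, hpt]
      exact (Finset.sum_eq_zero_iff_of_nonneg (fun w _ => hPr0' w)).1 hsum w hw
    rw [h0, zero_mul]
  · rw [nu1_phi (fun A => if x ∈ A then 1 else 0) hpt, mul_div_cancel₀]
    · apply Finset.sum_congr rfl
      intro w hw
      congr 1
      by_cases hxw : x ∈ w
      · rw [if_pos hxw, if_pos (Finset.mem_inter.2 ⟨hxw, hx⟩)]
      · rw [if_neg hxw, if_neg (fun h => hxw (Finset.mem_inter.1 h).1)]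
    · exact hpt

lemma nu0_x {x : τ} (hx : x ∈ C) (hPr0' : ∀ w, 0 ≤ Pr w)
    (hPr1 : ∑ w : Finset τ, Pr w = 1)
    (hmarg : ∑ w ∈ univ.filter (fun w => t ∈ w), Pr w = p t) :
    (1 - p t) * ∑ A ∈ C.powerset, nu0 p Pr C t A * (if x ∈ A then 1 else 0) =
      ∑ w ∈ univ.filter (fun w => t ∉ w), Pr w * (if x ∈ w then 1 else 0) := by
  by_cases hpt : p t = 1
  · rw [hpt, sub_self, zero_mul]
    symm
    apply Finset.sum_eq_zero
    intro w hw
    have h0 : Pr w = 0 := by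
      have hsum : ∑ w ∈ univ.filter (fun w => t ∉ w), Pr w = 0 := by
        rw [marg_compl hPr1 hmarg, hpt]; ring
      exact (Finset.sum_eq_zero_iff_of_nonneg (fun w _ => hPr0' w)).1 hsum w hw
    rw [h0, zero_mul]
  · rw [nu0_phi (fun A => if x ∈ A then 1 else 0) hpt, mul_div_cancel₀]
    · apply Finset.sum_congr rfl
      intro w hw
      congr 1
      by_cases hxw : x ∈ w
      · rw [if_pos hxw, if_pos (Finset.mem_inter.2 ⟨hxw, hx⟩)]
      · rw [if_neg hxw, if_neg (fun h => hxw (Finset.mem_inter.1 h).1)]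
    · intro h; exact hpt (by linarith)

lemma nu1_tind (htC : t ∈ C) (hmarg : ∑ w ∈ univ.filter (fun w => t ∈ w), Pr w = p t) :
    ∑ A ∈ C.powerset, nu1 p Pr C t A * (if t ∈ A then 1 else 0) =
      if p t = 0 then 0 else 1 := by
  by_cases hpt : p t = 0
  · rw [if_pos hpt]
    apply Finset.sum_eq_zero
    intro A hA
    rw [nu1, if_pos hpt]
    by_cases h : A = ∅
    · subst h; simp
    · rw [if_neg h]; ring
  · rw [if_neg hpt]
    have : ∀ A ∈ C.powerset, nu1 p Pr C t A * (if t ∈ A then 1 else 0) = nu1 p Pr C t A := by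
      intro A hA
      by_cases htA : t ∈ A
      · rw [if_pos htA]; ring
      · rw [if_neg htA]
        have : nu1 p Pr C t A = 0 := by
          rw [nu1, if_neg hpt]
          have : ∑ w ∈ (univ.filter (fun w => t ∈ w)).filter (fun w => w ∩ C = A), Pr w = 0 := by
            apply Finset.sum_eq_zero
            intro w hw
            simp only [Finset.mem_filter, Finset.mem_univ, true_and] at hw
            exact absurd (hw.2 ▸ Finset.mem_inter.2 ⟨hw.1, htC⟩) htA
          rw [this]; ring
        rw [this]; ring
    rw [Finset.sum_congr rfl this, nu1_total hmarg]

lemma nu0_tind (htC : t ∈ C) :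
    ∑ A ∈ C.powerset, nu0 p Pr C t A * (if t ∈ A then 1 else 0) = 0 := by
  apply Finset.sum_eq_zero
  intro A hA
  by_cases htA : t ∈ A
  · rw [if_pos htA]
    have : nu0 p Pr C t A = 0 := by
      rw [nu0]
      split_ifs with h1 h2
      · exact absurd (h2 ▸ htA) (Finset.notMem_empty t)
      · rfl
      · have : ∑ w ∈ (univ.filter (fun w => t ∉ w)).filter (fun w => w ∩ C = A), Pr w = 0 := by
          apply Finset.sum_eq_zero
          intro w hw
          simp only [Finset.mem_filter, Finset.mem_univ, true_and] at hw
          exact absurd (Finset.mem_inter.1 (hw.2 ▸ htA : t ∈ w ∩ C)).1 hw.1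
        rw [this]; ring
    rw [this]; ring
  · rw [if_neg htA]; ring

lemma nu1_edge {e A : Finset τ} (hkill : ∀ w, e ⊆ w → Pr w = 0) (hene : e.Nonempty)
    (heA : e ⊆ A) : nu1 p Pr C t A = 0 := by
  rw [nu1]
  split_ifs with h1 h2
  · obtain ⟨y, hy⟩ := hene
    exact absurd (h2 ▸ heA hy) (Finset.notMem_empty y)
  · rfl
  · have : ∑ w ∈ (univ.filter (fun w => t ∈ w)).filter (fun w => w ∩ C = A), Pr w = 0 := by
      apply Finset.sum_eq_zero
      intro w hw
      simp only [Finset.mem_filter, Finset.mem_univ, true_and] at hw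
      exact hkill w (fun y hy => (Finset.mem_inter.1 (hw.2 ▸ heA hy : y ∈ w ∩ C)).1)
    rw [this]; ring

lemma nu0_edge {e A : Finset τ} (hkill : ∀ w, e ⊆ w → Pr w = 0) (hene : e.Nonempty)
    (heA : e ⊆ A) : nu0 p Pr C t A = 0 := by
  rw [nu0]
  split_ifs with h1 h2
  · obtain ⟨y, hy⟩ := hene
    exact absurd (h2 ▸ heA hy) (Finset.notMem_empty y)
  · rfl
  · have : ∑ w ∈ (univ.filter (fun w => t ∉ w)).filter (fun w => w ∩ C = A), Pr w = 0 := by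
      apply Finset.sum_eq_zero
      intro w hw
      simp only [Finset.mem_filter, Finset.mem_univ, true_and] at hw
      exact hkill w (fun y hy => (Finset.mem_inter.1 (hw.2 ▸ heA hy : y ∈ w ∩ C)).1)
    rw [this]; ring

end NuLemmas
lemma prod_update (S : Finset τ) {t0 : τ} (ht0 : t0 ∈ S) (F : τ → ℝ) (c : ℝ) :
    ∏ t ∈ S, (if t = t0 then F t * c else F t) = (∏ t ∈ S, F t) * c := by
  rw [← Finset.mul_prod_erase S (fun t => if t = t0 then F t * c else F t) ht0,
    ← Finset.mul_prod_erase S F ht0, if_pos rfl]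
  have : ∏ t ∈ S.erase t0, (if t = t0 then F t * c else F t) = ∏ t ∈ S.erase t0, F t :=
    Finset.prod_congr rfl (fun t ht => if_neg (Finset.ne_of_mem_erase ht))
  rw [this]; ring


/-- if no two distinct tuples of `S` are connected by a path in the
conflict hypergraph, then `p^min(S) = max {0, Σ_{t∈S} p(t) − |S| + 1}`. -/
theorem pmin_of_pairwise_disconnected
    (p : τ → ℝ) (hp : ∀ t, 0 ≤ p t ∧ p t ≤ 1)
    (E : Set (Finset τ)) (hedges : ∀ e ∈ E, e.Nonempty)
    (hcons : Consistent p E)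
    (S : Finset τ)
    (hdisc : ∀ t1 ∈ S, ∀ t2 ∈ S, t1 ≠ t2 → ¬ ∃ l, IsHyperPath E t1 t2 l) :
    IsLeast {x : ℝ | ∃ Pr, IsModel p E Pr ∧ coexistProb Pr S = x}
      (max 0 ((∑ t ∈ S, p t) - (S.card : ℝ) + 1)) := by
  classical
  obtain ⟨Pr, ⟨⟨hPr0, hPr1, hPrm⟩, hPrE⟩⟩ := hcons
  have hkill : ∀ e ∈ E, ∀ w, e ⊆ w → Pr w = 0 := fun e he w hew => hPrE w ⟨e, he, hew⟩
  constructor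
  · -- MEMBERSHIP
    set C : τ → Finset τ := fun t => univ.filter (fun x => Conn E t x) with hC_def
    have htC : ∀ t, t ∈ C t := fun t => by
      simp only [hC_def, Finset.mem_filter, Finset.mem_univ, true_and]
      exact conn_refl E t
    have hCdisj : ∀ t1 ∈ S, ∀ t2 ∈ S, t1 ≠ t2 → Disjoint (C t1) (C t2) := by
      intro t1 h1 t2 h2 hne
      rw [Finset.disjoint_left]
      intro x hx1 hx2
      simp only [hC_def, Finset.mem_filter, Finset.mem_univ, true_and] at hx1 hx2
      rcases conn_trans hx1 (conn_symm hx2) with h | h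
      · exact hne h
      · exact hdisc t1 h1 t2 h2 hne ⟨_, h.choose_spec⟩
    have hedgeC : ∀ e ∈ E, ∀ t, ∀ x ∈ e, x ∈ C t → e ⊆ C t := by
      intro e he t x hxe hxC y hye
      simp only [hC_def, Finset.mem_filter, Finset.mem_univ, true_and] at hxC ⊢
      exact conn_trans hxC (conn_of_edge he hxe hye)
    set U : Finset τ := S.biUnion C with hU_def
    have hCU : ∀ t ∈ S, C t ⊆ U := fun t ht => Finset.subset_biUnion_of_mem C ht
    have hCV : ∀ t ∈ S, Disjoint (C t) Uᶜ := fun t ht =>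
      disjoint_compl_right.mono_left (hCU t ht)
    set R : Finset τ → ℝ := fun B => ∑ w ∈ univ.filter (fun w => w ∩ Uᶜ = B), Pr w with hR_def
    obtain ⟨μ, hμ0, hμsupp, hμtot, hμmarg, hμS⟩ := exists_coupling p hp S
    set g : Finset τ → τ → Finset τ → ℝ :=
      fun X t A => if t ∈ X then nu1 p Pr (C t) t A else nu0 p Pr (C t) t A with hg_def
    set Pr' : Finset τ → ℝ := fun w =>
      ∑ X : Finset τ, μ X * ((∏ t ∈ S, g X t (w ∩ C t)) * R (w ∩ Uᶜ)) with hPr'_def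
    have hRphi : ∀ φ : Finset τ → ℝ,
        ∑ B ∈ Uᶜ.powerset, R B * φ B = ∑ w : Finset τ, Pr w * φ (w ∩ Uᶜ) := fun φ =>
      fiber_sum univ (· ∩ Uᶜ) Uᶜ.powerset
        (fun w _ => Finset.mem_powerset.2 Finset.inter_subset_right) Pr φ
    have hRtot : ∑ B ∈ Uᶜ.powerset, R B = 1 := by
      have h1 : ∑ B ∈ Uᶜ.powerset, R B = ∑ B ∈ Uᶜ.powerset, R B * 1 := by
        apply Finset.sum_congr rfl; intros; ring
      rw [h1, hRphi (fun _ => 1)]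
      have h2 : ∀ w ∈ (univ : Finset (Finset τ)), Pr w * 1 = Pr w := by intros; ring
      rw [Finset.sum_congr rfl h2, hPr1]
    have master : ∀ (G : τ → Finset τ → ℝ) (h : Finset τ → ℝ),
        ∑ w : Finset τ, (∏ t ∈ S, G t (w ∩ C t)) * h (w ∩ Uᶜ) =
          (∏ t ∈ S, ∑ A ∈ (C t).powerset, G t A) * (∑ B ∈ Uᶜ.powerset, h B) := by
      intro G h
      have heq := factor_sum S C Uᶜ G h hCdisj hCV
      rw [show S.biUnion C ∪ Uᶜ = Finset.univ by
            rw [← hU_def]; exact Finset.union_compl U,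
          Finset.powerset_univ] at heq
      exact heq
    have hg_total : ∀ X, ∀ t ∈ S, ∑ A ∈ (C t).powerset, g X t A = 1 := by
      intro X t _
      by_cases h : t ∈ X
      · have : ∀ A ∈ (C t).powerset, g X t A = nu1 p Pr (C t) t A := by
          intro A _; simp only [hg_def]; exact if_pos h
        rw [Finset.sum_congr rfl this]; exact nu1_total (hPrm t)
      · have : ∀ A ∈ (C t).powerset, g X t A = nu0 p Pr (C t) t A := by
          intro A _; simp only [hg_def]; exact if_neg h
        rw [Finset.sum_congr rfl this]; exact nu0_total hPr1 (hPrm t)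
    have hswap : ∀ f : Finset τ → Finset τ → ℝ,
        ∑ w : Finset τ, ∑ X : Finset τ, f X w = ∑ X : Finset τ, ∑ w : Finset τ, f X w :=
      fun f => Finset.sum_comm
    -- nonnegativity
    have hg0 : ∀ X t A, t ∈ S → 0 ≤ g X t A := by
      intro X t A _
      simp only [hg_def]
      split_ifs
      · exact nu1_nonneg hPr0 (hp t).1 A
      · exact nu0_nonneg hPr0 (hp t).2 A
    have hR0 : ∀ B, 0 ≤ R B := fun B => Finset.sum_nonneg (fun w _ => hPr0 w)
    have hPr'0 : ∀ w, 0 ≤ Pr' w := by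
      intro w
      apply Finset.sum_nonneg
      intro X _
      exact mul_nonneg (hμ0 X) (mul_nonneg
        (Finset.prod_nonneg (fun t ht => hg0 X t _ ht)) (hR0 _))
    -- total mass
    have hPr'1 : ∑ w : Finset τ, Pr' w = 1 := by
      rw [hPr'_def, hswap]
      have : ∀ X ∈ (univ : Finset (Finset τ)),
          ∑ w : Finset τ, μ X * ((∏ t ∈ S, g X t (w ∩ C t)) * R (w ∩ Uᶜ)) = μ X := by
        intro X _
        rw [← Finset.mul_sum, master (g X) R, hRtot,
          Finset.prod_congr rfl (hg_total X)]
        simp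
      rw [Finset.sum_congr rfl this, hμtot]
    -- marginals
    have hμcompl : ∀ t ∈ S, ∑ X ∈ univ.filter (fun X => t ∉ X), μ X = 1 - p t := by
      intro t ht
      have h := Finset.sum_filter_add_sum_filter_not univ (fun X => t ∈ X) μ
      rw [hμtot, hμmarg t ht] at h
      linarith
    have hPr'm : ∀ x : τ, ∑ w ∈ univ.filter (fun w => x ∈ w), Pr' w = p x := by
      intro x
      rw [Finset.sum_filter]
      have step1 : ∀ w : Finset τ, (if x ∈ w then Pr' w else 0) =
          ∑ X : Finset τ, μ X *
            (if x ∈ w then (∏ t ∈ S, g X t (w ∩ C t)) * R (w ∩ Uᶜ) else 0) := by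
        intro w
        by_cases h : x ∈ w
        · rw [if_pos h, hPr'_def]
          apply Finset.sum_congr rfl
          intro X _; rw [if_pos h]
        · rw [if_neg h]
          symm
          apply Finset.sum_eq_zero
          intro X _; rw [if_neg h, mul_zero]
      rw [Finset.sum_congr rfl (fun w _ => step1 w), hswap]
      by_cases hxU : x ∈ U
      · obtain ⟨t0, ht0S, hx0⟩ := Finset.mem_biUnion.1 hxU
        have inner : ∀ X : Finset τ,
            ∑ w : Finset τ, (if x ∈ w then (∏ t ∈ S, g X t (w ∩ C t)) * R (w ∩ Uᶜ) else 0) =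
            (∑ A ∈ (C t0).powerset, g X t0 A * (if x ∈ A then 1 else 0)) := by
          intro X
          have hpoint : ∀ w : Finset τ,
              (if x ∈ w then (∏ t ∈ S, g X t (w ∩ C t)) * R (w ∩ Uᶜ) else 0) =
              (∏ t ∈ S, (if t = t0 then g X t (w ∩ C t) * (if x ∈ w ∩ C t then 1 else 0)
                else g X t (w ∩ C t))) * R (w ∩ Uᶜ) := by
            intro w
            have hpr : ∏ t ∈ S, (if t = t0 then g X t (w ∩ C t) *
                  (if x ∈ w ∩ C t then 1 else 0) else g X t (w ∩ C t)) =
                (∏ t ∈ S, g X t (w ∩ C t)) * (if x ∈ w ∩ C t0 then 1 else 0) := by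
              have := prod_update S ht0S (fun t => g X t (w ∩ C t))
                (if x ∈ w ∩ C t0 then 1 else 0)
              rw [← this]
              apply Finset.prod_congr rfl
              intro t ht
              by_cases h : t = t0
              · subst h; rw [if_pos rfl]
              · rw [if_neg h, if_neg h]
            rw [hpr]
            by_cases h : x ∈ w
            · rw [if_pos h, if_pos (Finset.mem_inter.2 ⟨h, hx0⟩), mul_one]
            · rw [if_neg h, if_neg (fun hh => h (Finset.mem_inter.1 hh).1), mul_zero,
                zero_mul]
          have hm := master (fun t' A => if t' = t0 then g X t' A * (if x ∈ A then 1 else 0)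
            else g X t' A) R
          rw [Finset.sum_congr rfl (fun w _ => hpoint w), hm, hRtot, mul_one]
          have hones : ∀ t ∈ S, t ≠ t0 →
              (∑ A ∈ (C t).powerset,
                (if t = t0 then g X t A * (if x ∈ A then 1 else 0) else g X t A)) = 1 := by
            intro t ht hne
            have : ∀ A ∈ (C t).powerset,
                (if t = t0 then g X t A * (if x ∈ A then 1 else 0) else g X t A) = g X t A :=
              fun A _ => if_neg hne
            rw [Finset.sum_congr rfl this]
            exact hg_total X t ht
          rw [Finset.prod_eq_single_of_mem t0 ht0S hones]
          apply Finset.sum_congr rfl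
          intro A _
          rw [if_pos rfl]
        have hIn : ∀ X ∈ (univ : Finset (Finset τ)),
            (∑ w : Finset τ, μ X *
              (if x ∈ w then (∏ t ∈ S, g X t (w ∩ C t)) * R (w ∩ Uᶜ) else 0)) =
            μ X * ∑ A ∈ (C t0).powerset, g X t0 A * (if x ∈ A then 1 else 0) := by
          intro X _
          rw [← Finset.mul_sum, inner X]
        rw [Finset.sum_congr rfl hIn]
        -- now ∑ X, μ X * M X with M depending only on t0 ∈ X
        have hMif : ∀ X : Finset τ, ∑ A ∈ (C t0).powerset, g X t0 A * (if x ∈ A then 1 else 0) =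
            if t0 ∈ X then
              ∑ A ∈ (C t0).powerset, nu1 p Pr (C t0) t0 A * (if x ∈ A then 1 else 0)
            else ∑ A ∈ (C t0).powerset, nu0 p Pr (C t0) t0 A * (if x ∈ A then 1 else 0) := by
          intro X
          by_cases h : t0 ∈ X
          · rw [if_pos h]
            apply Finset.sum_congr rfl
            intro A _
            simp only [hg_def]
            rw [if_pos h]
          · rw [if_neg h]
            apply Finset.sum_congr rfl
            intro A _
            simp only [hg_def]
            rw [if_neg h]
        have hIf : ∀ X ∈ (univ : Finset (Finset τ)),
            μ X * (∑ A ∈ (C t0).powerset, g X t0 A * (if x ∈ A then 1 else 0)) =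
            μ X * (if t0 ∈ X then
              ∑ A ∈ (C t0).powerset, nu1 p Pr (C t0) t0 A * (if x ∈ A then 1 else 0)
            else ∑ A ∈ (C t0).powerset, nu0 p Pr (C t0) t0 A * (if x ∈ A then 1 else 0)) := by
          intro X _
          rw [hMif X]
        rw [Finset.sum_congr rfl hIf]
        rw [← Finset.sum_filter_add_sum_filter_not univ (fun X => t0 ∈ X)]
        have e1 : ∑ X ∈ univ.filter (fun X => t0 ∈ X), μ X *
            (if t0 ∈ X then
              ∑ A ∈ (C t0).powerset, nu1 p Pr (C t0) t0 A * (if x ∈ A then 1 else 0)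
            else ∑ A ∈ (C t0).powerset, nu0 p Pr (C t0) t0 A * (if x ∈ A then 1 else 0)) =
            p t0 * ∑ A ∈ (C t0).powerset, nu1 p Pr (C t0) t0 A * (if x ∈ A then 1 else 0) := by
          rw [← hμmarg t0 ht0S, Finset.sum_mul]
          apply Finset.sum_congr rfl
          intro X hX
          rw [if_pos (Finset.mem_filter.1 hX).2]
        have e0 : ∑ X ∈ univ.filter (fun X => ¬ t0 ∈ X), μ X *
            (if t0 ∈ X then
              ∑ A ∈ (C t0).powerset, nu1 p Pr (C t0) t0 A * (if x ∈ A then 1 else 0)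
            else ∑ A ∈ (C t0).powerset, nu0 p Pr (C t0) t0 A * (if x ∈ A then 1 else 0)) =
            (1 - p t0) *
              ∑ A ∈ (C t0).powerset, nu0 p Pr (C t0) t0 A * (if x ∈ A then 1 else 0) := by
          rw [← hμcompl t0 ht0S, Finset.sum_mul]
          apply Finset.sum_congr rfl
          intro X hX
          rw [if_neg (Finset.mem_filter.1 hX).2]
        rw [e1, e0, nu1_x hx0 hPr0 (hPrm t0), nu0_x hx0 hPr0 hPr1 (hPrm t0)]
        rw [Finset.sum_filter_add_sum_filter_not univ (fun w => t0 ∈ w)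
          (fun w => Pr w * (if x ∈ w then 1 else 0))]
        have : ∑ w : Finset τ, Pr w * (if x ∈ w then 1 else 0) = p x := by
          rw [← hPrm x, Finset.sum_filter]
          apply Finset.sum_congr rfl
          intro w _
          by_cases h : x ∈ w
          · rw [if_pos h, if_pos h, mul_one]
          · rw [if_neg h, if_neg h, mul_zero]
        rw [this]
      · -- x ∉ U
        have hxV : x ∈ Uᶜ := Finset.mem_compl.2 hxU
        have inner : ∀ X : Finset τ,
            ∑ w : Finset τ, (if x ∈ w then (∏ t ∈ S, g X t (w ∩ C t)) * R (w ∩ Uᶜ) else 0) =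
            p x := by
          intro X
          have hpoint : ∀ w : Finset τ,
              (if x ∈ w then (∏ t ∈ S, g X t (w ∩ C t)) * R (w ∩ Uᶜ) else 0) =
              (∏ t ∈ S, g X t (w ∩ C t)) * (R (w ∩ Uᶜ) * (if x ∈ w ∩ Uᶜ then 1 else 0)) := by
            intro w
            by_cases h : x ∈ w
            · rw [if_pos h, if_pos (Finset.mem_inter.2 ⟨h, hxV⟩), mul_one]
            · rw [if_neg h, if_neg (fun hh => h (Finset.mem_inter.1 hh).1), mul_zero,
                mul_zero]
          rw [Finset.sum_congr rfl (fun w _ => hpoint w),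
            master (g X) (fun B => R B * (if x ∈ B then 1 else 0)),
            Finset.prod_congr rfl (hg_total X), Finset.prod_const_one, one_mul,
            hRphi (fun B => if x ∈ B then 1 else 0)]
          have : ∀ w ∈ (univ : Finset (Finset τ)),
              Pr w * (if x ∈ w ∩ Uᶜ then 1 else 0) = Pr w * (if x ∈ w then 1 else 0) := by
            intro w _
            by_cases h : x ∈ w
            · rw [if_pos h, if_pos (Finset.mem_inter.2 ⟨h, hxV⟩)]
            · rw [if_neg h, if_neg (fun hh => h (Finset.mem_inter.1 hh).1)]
          rw [Finset.sum_congr rfl this, ← hPrm x, Finset.sum_filter]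
          apply Finset.sum_congr rfl
          intro w _
          by_cases h : x ∈ w
          · rw [if_pos h, if_pos h, mul_one]
          · rw [if_neg h, if_neg h, mul_zero]
        have hIn : ∀ X ∈ (univ : Finset (Finset τ)),
            (∑ w : Finset τ, μ X *
              (if x ∈ w then (∏ t ∈ S, g X t (w ∩ C t)) * R (w ∩ Uᶜ) else 0)) =
            μ X * p x := by
          intro X _
          rw [← Finset.mul_sum, inner X]
        rw [Finset.sum_congr rfl hIn, ← Finset.sum_mul, hμtot, one_mul]
    -- edge condition
    have hPr'E : ∀ w : Finset τ, (∃ e ∈ E, e ⊆ w) → Pr' w = 0 := by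
      rintro w ⟨e, he, hew⟩
      rw [hPr'_def]
      apply Finset.sum_eq_zero
      intro X _
      by_cases hcase : ∃ t ∈ S, ∃ x ∈ e, x ∈ C t
      · obtain ⟨t, htS, x, hxe, hxC⟩ := hcase
        have heC : e ⊆ C t := hedgeC e he t x hxe hxC
        have hz : g X t (w ∩ C t) = 0 := by
          have hsub : e ⊆ w ∩ C t := fun y hy => Finset.mem_inter.2 ⟨hew hy, heC hy⟩
          simp only [hg_def]
          split_ifs
          · exact nu1_edge (hkill e he) (hedges e he) hsub
          · exact nu0_edge (hkill e he) (hedges e he) hsub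
        rw [Finset.prod_eq_zero htS hz, zero_mul, mul_zero]
      · push_neg at hcase
        have hsub : e ⊆ w ∩ Uᶜ := by
          intro y hy
          refine Finset.mem_inter.2 ⟨hew hy, Finset.mem_compl.2 ?_⟩
          intro hyU
          obtain ⟨t, htS, hyC⟩ := Finset.mem_biUnion.1 hyU
          exact hcase t htS y hy hyC
        have hz : R (w ∩ Uᶜ) = 0 := by
          simp only [hR_def]
          apply Finset.sum_eq_zero
          intro w' hw'
          simp only [Finset.mem_filter, Finset.mem_univ, true_and] at hw'
          exact hkill e he w' (fun y hy => (Finset.mem_inter.1 (hw'.symm ▸ hsub hy)).1)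
        rw [hz, mul_zero, mul_zero]
    -- coexistence probability
    have hcoex : coexistProb Pr' S = max 0 ((∑ t ∈ S, p t) - (S.card : ℝ) + 1) := by
      rw [coexistProb, Finset.sum_filter]
      have step1 : ∀ w : Finset τ, (if S ⊆ w then Pr' w else 0) =
          ∑ X : Finset τ, μ X *
            ((∏ t ∈ S, (g X t (w ∩ C t) * (if t ∈ w ∩ C t then 1 else 0))) * R (w ∩ Uᶜ)) := by
        intro w
        have hind : ∀ t ∈ S, t ∈ w ∩ C t ↔ t ∈ w := by
          intro t _
          constructor
          · exact fun h => (Finset.mem_inter.1 h).1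
          · exact fun h => Finset.mem_inter.2 ⟨h, htC t⟩
        by_cases h : S ⊆ w
        · rw [if_pos h, hPr'_def]
          apply Finset.sum_congr rfl
          intro X _
          congr 1
          congr 1
          apply Finset.prod_congr rfl
          intro t ht
          rw [if_pos ((hind t ht).2 (h ht)), mul_one]
        · rw [if_neg h]
          symm
          apply Finset.sum_eq_zero
          intro X _
          obtain ⟨t1, ht1S, ht1w⟩ := Finset.not_subset.1 h
          have : (g X t1 (w ∩ C t1) * (if t1 ∈ w ∩ C t1 then 1 else 0)) = 0 := by
            rw [if_neg (fun hh => ht1w ((hind t1 ht1S).1 hh)), mul_zero]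
          rw [Finset.prod_eq_zero ht1S this, zero_mul, mul_zero]
      rw [Finset.sum_congr rfl (fun w _ => step1 w), hswap]
      have inner : ∀ X : Finset τ,
          ∑ w : Finset τ, μ X *
            ((∏ t ∈ S, (g X t (w ∩ C t) * (if t ∈ w ∩ C t then 1 else 0))) * R (w ∩ Uᶜ)) =
          μ X * ∏ t ∈ S, (if t ∈ X then (if p t = 0 then 0 else 1) else 0) := by
        intro X
        rw [← Finset.mul_sum,
          master (fun t A => g X t A * (if t ∈ A then 1 else 0)) R, hRtot, mul_one]
        congr 1
        apply Finset.prod_congr rfl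
        intro t ht
        by_cases h : t ∈ X
        · rw [if_pos h]
          have : ∀ A ∈ (C t).powerset, g X t A * (if t ∈ A then 1 else 0) =
              nu1 p Pr (C t) t A * (if t ∈ A then 1 else 0) := by
            intro A _
            simp only [hg_def]
            rw [if_pos h]
          rw [Finset.sum_congr rfl this, nu1_tind (htC t) (hPrm t)]
        · rw [if_neg h]
          have : ∀ A ∈ (C t).powerset, g X t A * (if t ∈ A then 1 else 0) =
              nu0 p Pr (C t) t A * (if t ∈ A then 1 else 0) := by
            intro A _
            simp only [hg_def]
            rw [if_neg h]
          rw [Finset.sum_congr rfl this, nu0_tind (htC t)]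
      rw [Finset.sum_congr rfl (fun X _ => inner X)]
      by_cases hall : ∀ t ∈ S, p t ≠ 0
      · have hprod : ∀ X : Finset τ,
            ∏ t ∈ S, (if t ∈ X then (if p t = 0 then (0:ℝ) else 1) else 0) =
            if S ⊆ X then 1 else 0 := by
          intro X
          by_cases h : S ⊆ X
          · rw [if_pos h]
            apply Finset.prod_eq_one
            intro t ht
            rw [if_pos (h ht), if_neg (hall t ht)]
          · rw [if_neg h]
            obtain ⟨t1, ht1S, ht1X⟩ := Finset.not_subset.1 h
            exact Finset.prod_eq_zero ht1S (if_neg ht1X)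
        have hIf : ∀ X ∈ (univ : Finset (Finset τ)),
            μ X * (∏ t ∈ S, (if t ∈ X then (if p t = 0 then 0 else 1) else 0)) =
            μ X * (if S ⊆ X then 1 else 0) := by
          intro X _
          exact congrArg (fun z => μ X * z) (hprod X)
        rw [Finset.sum_congr rfl hIf]
        have hsingle : (∑ X : Finset τ, μ X * (if S ⊆ X then 1 else 0)) =
            μ S * (if S ⊆ S then 1 else 0) := by
          apply Finset.sum_eq_single S
          · intro X _ hne
            by_cases h : S ⊆ X
            · rw [hμsupp X (fun hXS => hne (Finset.Subset.antisymm hXS h)), zero_mul]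
            · rw [if_neg h, mul_zero]
          · intro h
            exact absurd (Finset.mem_univ S) h
        rw [hsingle, if_pos (Finset.Subset.refl S), mul_one, hμS]
      · push_neg at hall
        obtain ⟨t0, ht0S, hpt0⟩ := hall
        have hz : ∀ X : Finset τ,
            μ X * ∏ t ∈ S, (if t ∈ X then (if p t = 0 then 0 else 1) else 0) = 0 := by
          intro X
          have : (if t0 ∈ X then (if p t0 = 0 then 0 else 1) else (0:ℝ)) = 0 := by
            by_cases h : t0 ∈ X
            · rw [if_pos h, if_pos hpt0]
            · rw [if_neg h]
          rw [Finset.prod_eq_zero ht0S this, mul_zero]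
        rw [Finset.sum_congr rfl (fun X _ => hz X)]
        rw [Finset.sum_const_zero]
        symm
        rw [max_eq_left]
        have hsum : ∑ t ∈ S, p t = ∑ t ∈ S.erase t0, p t := by
          rw [← Finset.add_sum_erase S p ht0S, hpt0, zero_add]
        have hbound : ∑ t ∈ S.erase t0, p t ≤ ((S.erase t0).card : ℝ) := by
          calc ∑ t ∈ S.erase t0, p t ≤ ∑ t ∈ S.erase t0, 1 :=
                Finset.sum_le_sum (fun t _ => (hp t).2)
            _ = ((S.erase t0).card : ℝ) := by rw [Finset.sum_const, nsmul_eq_mul, mul_one]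
        have hcard : ((S.erase t0).card : ℝ) = (S.card : ℝ) - 1 := by
          rw [Finset.card_erase_of_mem ht0S]
          have : 1 ≤ S.card := Finset.card_pos.2 ⟨t0, ht0S⟩
          push_cast [Nat.cast_sub this]
          ring
        rw [hsum]
        linarith
    exact ⟨Pr', ⟨⟨hPr'0, hPr'1, hPr'm⟩, hPr'E⟩, hcoex⟩
  · -- LOWER BOUND
    rintro x ⟨Q, ⟨⟨hQ0, hQ1, hQm⟩, hQE⟩, rfl⟩
    rw [coexistProb]
    apply max_le
    · exact Finset.sum_nonneg (fun w _ => hQ0 w)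
    · have hN : ∑ w ∈ univ.filter (fun w => ¬ S ⊆ w), Q w ≤ ∑ t ∈ S, (1 - p t) := by
        have h1 : ∑ t ∈ S, (1 - p t) =
            ∑ t ∈ S, ∑ w : Finset τ, (if t ∉ w then Q w else 0) := by
          apply Finset.sum_congr rfl
          intro t _
          rw [← marg_compl hQ1 (hQm t), Finset.sum_filter]
        rw [h1, Finset.sum_comm, Finset.sum_filter]
        apply Finset.sum_le_sum
        intro w _
        by_cases hSw : S ⊆ w
        · rw [if_neg (by simpa using hSw)]
          apply Finset.sum_nonneg
          intro t _
          split_ifs <;> first | exact hQ0 w | exact le_rfl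
        · rw [if_pos hSw]
          obtain ⟨t0, ht0S, ht0w⟩ := Finset.not_subset.1 hSw
          calc Q w = (if t0 ∉ w then Q w else 0) := by rw [if_pos ht0w]
            _ ≤ ∑ t ∈ S, (if t ∉ w then Q w else 0) := by
                apply Finset.single_le_sum (f := fun t => if t ∉ w then Q w else 0)
                · intro t _
                  split_ifs <;> first | exact hQ0 w | exact le_rfl
                · exact ht0S
      have htot := Finset.sum_filter_add_sum_filter_not univ (fun w => S ⊆ w) Q
      rw [hQ1] at htot
      have hconst : ∑ t ∈ S, (1 - p t) = (S.card : ℝ) - ∑ t ∈ S, p t := by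
        rw [Finset.sum_sub_distrib, Finset.sum_const, nsmul_eq_mul, mul_one]
      linarith
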